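/- Let Ω, Ω̄ ⊆ ℝⁿ be bounded open sets and c : ℝⁿ × ℝⁿ → ℝ a cost function satisfying (A0)–(A2) for Ω, Ω̄, such that Ω and Ω̄ are c-convex with respect to each other, and such that c satisfies Loeper's maximum principle. Let u : Ω → ℝ be a c-convex function, let x₀ ∈ Ω and x̄₀ ∈ ∂_c u(x₀), and define the contact set S₀ := {x ∈ Ω : u(x) = −c(x, x̄₀) + c(x₀, x̄₀) + u(x₀)}. Assume that −D_x c(x₀, x̄₀) lies in the relative (intrinsic) interior of the convex set {−D_x c(x₀, x̄) : x̄ ∈ ∂_c u(x₀)}. Then for every point x_e ∈ S₀ one has ∂_c u(x₀) ⊆ ∂_c u(x_e). -/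

import Mathlib

open Set Filter Topology

/-- From a point in the intrinsic interior of `s`, any segment from a point of `s`
can be extended a bit beyond it while staying in `s`. -/
lemma exists_extend_beyond {E : Type*} [NormedAddCommGroup E] [NormedSpace ℝ E]
    {s : Set E} {x y : E} (hx : x ∈ intrinsicInterior ℝ s) (hy : y ∈ s) :
    ∃ q ∈ s, ∃ t ∈ Set.Ioo (0:ℝ) 1, x = (1 - t) • y + t • q := by
  obtain ⟨w, hw, hwx⟩ := mem_intrinsicInterior.mp hx
  have hxs : x ∈ s := intrinsicInterior_subset hx
  have hxA : x ∈ affineSpan ℝ s := subset_affineSpan ℝ s hxs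
  have hyA : y ∈ affineSpan ℝ s := subset_affineSpan ℝ s hy
  have hnhds : (↑) ⁻¹' s ∈ 𝓝 w := mem_interior_iff_mem_nhds.mp hw
  have hs_nhds : s ∈ 𝓝[(affineSpan ℝ s : Set E)] x := by
    have := preimage_coe_mem_nhds_subtype.mp hnhds
    rwa [hwx] at this
  set γ : ℝ → E := fun ε => ε • (x - y) + x with hγ
  have hγA : ∀ ε : ℝ, γ ε ∈ affineSpan ℝ s := by
    intro ε
    have := AffineSubspace.smul_vsub_vadd_mem (affineSpan ℝ s) ε hxA hyA hxA
    simpa [vsub_eq_sub, vadd_eq_add] using this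
  have hγt : Filter.Tendsto γ (𝓝 0) (𝓝[(affineSpan ℝ s : Set E)] x) := by
    rw [tendsto_nhdsWithin_iff]
    constructor
    · have hc : Continuous γ := by
        exact (continuous_id.smul continuous_const).add continuous_const
      have := hc.tendsto 0
      simpa [hγ] using this
    · exact Filter.Eventually.of_forall fun ε => hγA ε
  have hev : ∀ᶠ ε in 𝓝 (0:ℝ), γ ε ∈ s := hγt.eventually_mem hs_nhds
  have hev2 : ∀ᶠ ε in 𝓝[>] (0:ℝ), γ ε ∈ s ∧ ε ∈ Set.Ioi (0:ℝ) :=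
    (hev.filter_mono nhdsWithin_le_nhds).and self_mem_nhdsWithin
  obtain ⟨ε, hεs, hεpos⟩ := hev2.exists
  have hε0 : (0:ℝ) < ε := hεpos
  refine ⟨γ ε, hεs, 1 / (1 + ε), ⟨by positivity, ?_⟩, ?_⟩
  · rw [div_lt_one (by linarith)]; linarith
  · have h1 : (1 : ℝ) + ε ≠ 0 := by positivity
    show x = (1 - 1 / (1 + ε)) • y + (1 / (1 + ε)) • (ε • (x - y) + x)
    match_scalars <;> field_simp <;> ring


/-- `D_x c(x,y)`: the Fréchet derivative of `c` in its first variable, identified with a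
vector in `ℝⁿ` via the inner product (i.e. the gradient in the first variable). -/
noncomputable def Dx {n : ℕ} (c : EuclideanSpace ℝ (Fin n) → EuclideanSpace ℝ (Fin n) → ℝ)
    (x y : EuclideanSpace ℝ (Fin n)) : EuclideanSpace ℝ (Fin n) :=
  gradient (fun z => c z y) x

/-- `D_x̄ c(x,y)`: the Fréchet derivative of `c` in its second variable, identified with a
vector in `ℝⁿ` via the inner product (i.e. the gradient in the second variable). -/
noncomputable def Dy {n : ℕ} (c : EuclideanSpace ℝ (Fin n) → EuclideanSpace ℝ (Fin n) → ℝ)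
    (x y : EuclideanSpace ℝ (Fin n)) : EuclideanSpace ℝ (Fin n) :=
  gradient (fun z => c x z) y

/-- The `c`-subdifferential of `u` at `x₀` (relative to domains `Ω`, `Ω̄`):
`∂_c u(x₀) = {x̄ ∈ Ω̄ : u(x) ≥ u(x₀) − c(x,x̄) + c(x₀,x̄) for all x ∈ Ω}`. -/
def csub {n : ℕ} (Ω Ωb : Set (EuclideanSpace ℝ (Fin n)))
    (c : EuclideanSpace ℝ (Fin n) → EuclideanSpace ℝ (Fin n) → ℝ)
    (u : EuclideanSpace ℝ (Fin n) → ℝ) (x₀ : EuclideanSpace ℝ (Fin n)) :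
    Set (EuclideanSpace ℝ (Fin n)) :=
  {y ∈ Ωb | ∀ x ∈ Ω, u x₀ - c x y + c x₀ y ≤ u x}

/-- Lemma 4.1 of the paper (for domains in `ℝⁿ`): under (A0)–(A2), mutual `c`-convexity of
the domains and Loeper's maximum principle, if `x̄₀ ∈ ∂_c u(x₀)` with `−D_x c(x₀,x̄₀)` in
the relative interior of `{−D_x c(x₀,x̄) : x̄ ∈ ∂_c u(x₀)}`, then for every point `x_e` of
the contact set `S₀ = {x ∈ Ω : u(x) = −c(x,x̄₀) + c(x₀,x̄₀) + u(x₀)}` one has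
`∂_c u(x₀) ⊆ ∂_c u(x_e)`. -/
theorem csubdifferential_containment
    (n : ℕ) (Ω Ωb : Set (EuclideanSpace ℝ (Fin n)))
    (hΩo : IsOpen Ω) (hΩbd : Bornology.IsBounded Ω)
    (hΩbo : IsOpen Ωb) (hΩbbd : Bornology.IsBounded Ωb)
    (c : EuclideanSpace ℝ (Fin n) → EuclideanSpace ℝ (Fin n) → ℝ)
    -- (A0): `c` is C⁴ on a neighborhood of the closure of `Ω × Ω̄`
    (hA0 : ∃ U : Set (EuclideanSpace ℝ (Fin n) × EuclideanSpace ℝ (Fin n)),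
      IsOpen U ∧ closure (Ω ×ˢ Ωb) ⊆ U ∧
        ContDiffOn ℝ 4 (fun q : EuclideanSpace ℝ (Fin n) × EuclideanSpace ℝ (Fin n) =>
          c q.1 q.2) U)
    -- (A1), twist
    (hA1x : ∀ x ∈ Ω, Set.InjOn (fun y => -Dx c x y) Ωb)
    (hA1y : ∀ y ∈ Ωb, Set.InjOn (fun x => -Dy c x y) Ω)
    -- (A2), nondegeneracy
    (hA2 : ∀ x ∈ Ω, ∀ y ∈ Ωb,
      Function.Bijective (fderiv ℝ (fun y' => Dx c x y') y))
    -- `Ω̄` is `c`-convex with respect to `Ω` and vice versa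
    (hccΩb : ∀ x ∈ Ω, Convex ℝ ((fun y => -Dx c x y) '' Ωb))
    (hccΩ : ∀ y ∈ Ωb, Convex ℝ ((fun x => -Dy c x y) '' Ω))
    -- Loeper's maximum principle
    (hLoeper : ∀ x₀ ∈ Ω, ∀ x ∈ Ω, ∀ y₀ ∈ Ωb, ∀ y₁ ∈ Ωb, ∀ t ∈ Set.Icc (0:ℝ) 1,
      ∀ yt ∈ Ωb,
        -Dx c x₀ yt = (1 - t) • (-Dx c x₀ y₀) + t • (-Dx c x₀ y₁) →
        -c x yt + c x₀ yt ≤ max (-c x y₀ + c x₀ y₀) (-c x y₁ + c x₀ y₁))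
    (u : EuclideanSpace ℝ (Fin n) → ℝ)
    -- `u` is `c`-convex
    (hu : ∀ x₀ ∈ Ω, ∃ y₀ ∈ Ωb, ∃ l : ℝ,
      u x₀ = -c x₀ y₀ + l ∧ ∀ x ∈ Ω, -c x y₀ + l ≤ u x)
    (x₀ : EuclideanSpace ℝ (Fin n)) (hx₀ : x₀ ∈ Ω)
    (xb₀ : EuclideanSpace ℝ (Fin n)) (hxb₀ : xb₀ ∈ csub Ω Ωb c u x₀)
    -- `−D_x c(x₀,x̄₀)` lies in the relative interior of `{−D_x c(x₀,x̄) : x̄ ∈ ∂_c u(x₀)}`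
    (hrelint : -Dx c x₀ xb₀ ∈
      intrinsicInterior ℝ ((fun y => -Dx c x₀ y) '' csub Ω Ωb c u x₀))
    (x_e : EuclideanSpace ℝ (Fin n)) (hx_e : x_e ∈ Ω)
    -- `x_e` lies in the contact set `S₀`
    (hcontact : u x_e = -c x_e xb₀ + c x₀ xb₀ + u x₀) :
    csub Ω Ωb c u x₀ ⊆ csub Ω Ωb c u x_e := by
  -- xb₀ is also in the c-subdifferential at x_e
  have hxb₀Ωb : xb₀ ∈ Ωb := hxb₀.1
  have hxb₀e : xb₀ ∈ csub Ω Ωb c u x_e := by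
    refine ⟨hxb₀Ωb, fun x hx => ?_⟩
    have h := hxb₀.2 x hx
    linarith
  -- differentiability of c in the first variable
  have hdiff : ∀ y ∈ Ωb, ∀ x ∈ Ω, DifferentiableAt ℝ (fun z => c z y) x := by
    intro y hy x hx
    obtain ⟨U, hUo, hUs, hcd⟩ := hA0
    have hm : ((x, y) : EuclideanSpace ℝ (Fin n) × EuclideanSpace ℝ (Fin n)) ∈ U :=
      hUs (subset_closure (Set.mk_mem_prod hx hy))
    have h1 : DifferentiableAt ℝ
        (fun q : EuclideanSpace ℝ (Fin n) × EuclideanSpace ℝ (Fin n) => c q.1 q.2) (x, y) :=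
      (hcd.contDiffAt (hUo.mem_nhds hm)).differentiableAt (by norm_num)
    have h2 : DifferentiableAt ℝ (fun z : EuclideanSpace ℝ (Fin n) => (z, y)) x :=
      differentiableAt_id.prodMk (differentiableAt_const y)
    exact h1.comp x h2
  intro yb hyb
  obtain ⟨hybΩb, hybsub⟩ := hyb
  by_cases hcase : u x₀ - c x_e yb + c x₀ yb = u x_e
  · exact ⟨hybΩb, fun x hx => by have := hybsub x hx; linarith⟩
  · -- the supporting value of yb at x_e is strictly below u x_e
    have hflt : u x₀ - c x_e yb + c x₀ yb < u x_e := lt_of_le_of_ne (hybsub x_e hx_e) hcase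
    -- extend the segment from -Dx c x₀ yb through -Dx c x₀ xb₀
    obtain ⟨q, hq, t, ht, hpt⟩ := exists_extend_beyond hrelint
      (Set.mem_image_of_mem _ (⟨hybΩb, hybsub⟩ : yb ∈ csub Ω Ωb c u x₀))
    obtain ⟨yb', hyb'sub, hq'⟩ := hq
    have hyb'Ωb : yb' ∈ Ωb := hyb'sub.1
    -- Loeper's maximum principle along this c-segment
    have hL : ∀ x ∈ Ω, -c x xb₀ + c x₀ xb₀ ≤
        max (-c x yb + c x₀ yb) (-c x yb' + c x₀ yb') := by
      intro x hx
      refine hLoeper x₀ hx₀ x hx yb hybΩb yb' hyb'Ωb t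
        (Set.mem_Icc.mpr ⟨ht.1.le, ht.2.le⟩) xb₀ hxb₀Ωb ?_
      have hq'' : -Dx c x₀ yb' = q := hq'
      rw [hq'']; exact hpt
    have hm_e : -c x_e xb₀ + c x₀ xb₀ = u x_e - u x₀ := by linarith
    -- at x_e the maximum is attained by yb'
    have hge : -c x_e yb' + c x₀ yb' = u x_e - u x₀ := by
      have h1 := hL x_e hx_e
      have h2 := hyb'sub.2 x_e hx_e
      rcases le_or_gt (-c x_e yb + c x₀ yb) (-c x_e yb' + c x₀ yb') with h | h
      · rw [max_eq_right h] at h1; linarith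
      · rw [max_eq_left h.le] at h1; linarith
    have hfg : -c x_e yb + c x₀ yb < -c x_e yb' + c x₀ yb' := by linarith
    -- local minimum of x ↦ c x xb₀ - c x yb' at x_e
    have hmin : IsLocalMin (fun x => c x xb₀ - c x yb') x_e := by
      have hcont1 : ContinuousAt (fun x => -c x yb + c x₀ yb) x_e :=
        ((hdiff yb hybΩb x_e hx_e).continuousAt.neg.add continuousAt_const)
      have hcont2 : ContinuousAt (fun x => -c x yb' + c x₀ yb') x_e :=
        ((hdiff yb' hyb'Ωb x_e hx_e).continuousAt.neg.add continuousAt_const)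
      filter_upwards [hΩo.mem_nhds hx_e, hcont1.eventually_lt hcont2 hfg] with x hx hlt
      have h1 := hL x hx
      rw [max_eq_right hlt.le] at h1
      show c x_e xb₀ - c x_e yb' ≤ c x xb₀ - c x yb'
      linarith
    -- hence the x-gradients of c(·,xb₀) and c(·,yb') agree at x_e
    have hfd : fderiv ℝ (fun z => c z xb₀) x_e = fderiv ℝ (fun z => c z yb') x_e := by
      have h0 : fderiv ℝ (fun x => c x xb₀ - c x yb') x_e = 0 := hmin.fderiv_eq_zero
      rw [fderiv_fun_sub (hdiff xb₀ hxb₀Ωb x_e hx_e) (hdiff yb' hyb'Ωb x_e hx_e)] at h0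
      exact sub_eq_zero.mp h0
    have hgrad : Dx c x_e xb₀ = Dx c x_e yb' := by
      unfold Dx gradient
      rw [hfd]
    -- by the twist condition, yb' = xb₀
    have hyb'eq : yb' = xb₀ := by
      refine hA1x x_e hx_e hyb'Ωb hxb₀Ωb ?_
      show -Dx c x_e yb' = -Dx c x_e xb₀
      rw [hgrad]
    -- hence q is the segment's midpoint-extension collapses: yb = xb₀
    have hq0 : q = -Dx c x₀ xb₀ := by rw [← hq', hyb'eq]
    have h1t : (1:ℝ) - t ≠ 0 := sub_ne_zero.mpr (ne_of_gt (by linarith [ht.2]))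
    rw [hq0] at hpt
    have hsm : (1 - t) • (-Dx c x₀ xb₀) = (1 - t) • (-Dx c x₀ yb) := by
      calc (1 - t) • (-Dx c x₀ xb₀) = -Dx c x₀ xb₀ - t • (-Dx c x₀ xb₀) := by
            rw [sub_smul, one_smul]
        _ = ((1 - t) • (-Dx c x₀ yb) + t • (-Dx c x₀ xb₀)) - t • (-Dx c x₀ xb₀) := by
            rw [← hpt]
        _ = (1 - t) • (-Dx c x₀ yb) := by abel
    have hyb_eq : yb = xb₀ := by
      refine hA1x x₀ hx₀ hybΩb hxb₀Ωb ?_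
      have h2 := smul_right_injective (EuclideanSpace ℝ (Fin n)) h1t hsm
      show -Dx c x₀ yb = -Dx c x₀ xb₀
      rw [h2]
    rw [hyb_eq]
    exact hxb₀e
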